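/- Let (x(n)) be an APGG sequence: x(0) = AᵀB y and x(n+1) = AᵀB y + (I − AᵀBA)(x(n) − κ·g(n)) with g(n)_i ∈ ∂F(x(n)_i), where ‖I − A AᵀB‖₂ ≤ ζ < 1, κ > 0, and y = A x* + e. Then for every n ≥ 0, ‖A(x(n) − x*)‖₂ ≤ ‖y‖₂·ζ^{n+1} + (C5/2)·κ + ‖e‖₂, where C5 = 2ζα√N‖A‖₂/(1−ζ). -/

import Mathlib

open Filter Set

/-- Weak convexity on `[0,∞)` with parameter `ρ`. -/
def WeaklyConvexOnNonneg (F : ℝ → ℝ) (ρ : ℝ) : Prop :=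
  ∀ t₁ t₂ : ℝ, 0 ≤ t₁ → 0 ≤ t₂ → ∀ l : ℝ, 0 ≤ l → l ≤ 1 →
    F (l * t₁ + (1 - l) * t₂) ≤
      l * F t₁ + (1 - l) * F t₂ - ρ * l * (1 - l) * (t₁ - t₂) ^ 2

/-- `F` is a weakly convex sparseness measure with weak-convexity parameter `ρ ≤ 0`. -/
structure IsWCSM (F : ℝ → ℝ) (ρ : ℝ) : Prop where
  zero : F 0 = 0
  even : ∀ t, F (-t) = F t
  nontrivial : ∃ t, F t ≠ 0
  mono : ∀ s t : ℝ, 0 ≤ s → s ≤ t → F s ≤ F t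
  ratio_anti : ∀ s t : ℝ, 0 < s → s ≤ t → F t / t ≤ F s / s
  rho_nonpos : ρ ≤ 0
  wconv : WeaklyConvexOnNonneg F ρ

/-- `α = lim_{t→0⁺} F(t)/t`, finite and positive, with `F(t) ≤ α|t|` for all `t`. -/
def IsAlpha (F : ℝ → ℝ) (α : ℝ) : Prop :=
  0 < α ∧ Tendsto (fun t => F t / t) (nhdsWithin 0 (Set.Ioi 0)) (nhds α) ∧
    ∀ t : ℝ, F t ≤ α * |t|

/-- The generalized gradient set `∂F(t)`; by convention `∂F(0) = {0}`. -/
noncomputable def genGrad (F : ℝ → ℝ) (t : ℝ) : Set ℝ :=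
  if t = 0 then {0}
  else {f : ℝ | ∀ ν : ℝ,
    ν * f ≤ Filter.limsup (fun θ => (F (t + θ * ν) - F t) / θ) (nhdsWithin 0 (Set.Ioi 0))}

/-- Euclidean (`ℓ2`) norm of a vector. -/
noncomputable def l2 {n : ℕ} (x : Fin n → ℝ) : ℝ := Real.sqrt (∑ i, (x i) ^ 2)

/-- `ℓ1` norm of a vector. -/
def l1 {n : ℕ} (x : Fin n → ℝ) : ℝ := ∑ i, |x i|

/-- `ℓ0` "norm": number of nonzero entries. -/
noncomputable def l0 {n : ℕ} (x : Fin n → ℝ) : ℕ :=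
  (Finset.univ.filter (fun i => x i ≠ 0)).card

/-- `z_S`: the vector equal to `z` on `S` and zero elsewhere. -/
def restr {n : ℕ} (x : Fin n → ℝ) (S : Finset (Fin n)) : Fin n → ℝ :=
  fun i => if i ∈ S then x i else 0

/-- `γ` is a null-space-constant bound for `(J, A, K)`. -/
def NSCBound {M N : ℕ} (J : (Fin N → ℝ) → ℝ) (A : Matrix (Fin M) (Fin N) ℝ)
    (K : ℕ) (γ : ℝ) : Prop :=
  ∀ z : Fin N → ℝ, A.mulVec z = 0 → ∀ S : Finset (Fin N), S.card ≤ K →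
    J (restr z S) ≤ γ * J (restr z Sᶜ)

/-- Spectral norm (`ℓ2`-operator norm) of a matrix. -/
noncomputable def opNorm2 {m n : ℕ} (A : Matrix (Fin m) (Fin n) ℝ) : ℝ :=
  sSup {c : ℝ | ∃ v : Fin n → ℝ, l2 v ≤ 1 ∧ c = l2 (A.mulVec v)}

/-! ### Auxiliary lemmas -/

lemma l2_eq_norm' {n : ℕ} (v : Fin n → ℝ) :
    l2 v = ‖(WithLp.equiv 2 (Fin n → ℝ)).symm v‖ := by
  rw [EuclideanSpace.norm_eq]
  simp [l2, sq_abs]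

lemma l2_nonneg' {n : ℕ} (v : Fin n → ℝ) : 0 ≤ l2 v := Real.sqrt_nonneg _

lemma l2_zero' {n : ℕ} : l2 (0 : Fin n → ℝ) = 0 := by simp [l2]

lemma l2_add_le' {n : ℕ} (u v : Fin n → ℝ) : l2 (u + v) ≤ l2 u + l2 v := by
  simp only [l2_eq_norm']
  rw [show (WithLp.equiv 2 (Fin n → ℝ)).symm (u + v)
      = (WithLp.equiv 2 (Fin n → ℝ)).symm u + (WithLp.equiv 2 (Fin n → ℝ)).symm v from rfl]
  exact norm_add_le _ _

lemma l2_smul' {n : ℕ} (c : ℝ) (v : Fin n → ℝ) : l2 (c • v) = |c| * l2 v := by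
  simp only [l2_eq_norm']
  rw [show (WithLp.equiv 2 (Fin n → ℝ)).symm (c • v)
      = c • (WithLp.equiv 2 (Fin n → ℝ)).symm v from rfl]
  rw [norm_smul, Real.norm_eq_abs]

lemma l2_neg' {n : ℕ} (v : Fin n → ℝ) : l2 (-v) = l2 v := by
  have := l2_smul' (-1 : ℝ) v
  simpa using this

lemma l2_eq_zero' {n : ℕ} {v : Fin n → ℝ} (h : l2 v = 0) : v = 0 := by
  rw [l2_eq_norm'] at h
  have := norm_eq_zero.mp h
  exact congrArg (WithLp.equiv 2 (Fin n → ℝ)) this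

lemma l2_le_of_abs_le' {n : ℕ} {v : Fin n → ℝ} {c : ℝ} (hc : 0 ≤ c)
    (h : ∀ i, |v i| ≤ c) : l2 v ≤ Real.sqrt n * c := by
  have : l2 v ≤ Real.sqrt (∑ _i : Fin n, c ^ 2) := by
    apply Real.sqrt_le_sqrt
    apply Finset.sum_le_sum
    intro i _
    calc v i ^ 2 = |v i| ^ 2 := (sq_abs _).symm
      _ ≤ c ^ 2 := by apply pow_le_pow_left₀ (abs_nonneg _) (h i)
  refine this.trans ?_
  rw [Finset.sum_const, Finset.card_univ, Fintype.card_fin, nsmul_eq_mul,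
    Real.sqrt_mul (by positivity), Real.sqrt_sq hc]

noncomputable def matCLM' {m n : ℕ} (A : Matrix (Fin m) (Fin n) ℝ) :
    EuclideanSpace ℝ (Fin n) →L[ℝ] EuclideanSpace ℝ (Fin m) :=
  LinearMap.toContinuousLinearMap
    { toFun := fun v => (WithLp.equiv 2 (Fin m → ℝ)).symm
        (A.mulVec ((WithLp.equiv 2 (Fin n → ℝ)) v))
      map_add' := by
        intro u v
        simp only [WithLp.equiv_apply, WithLp.ofLp_add, Matrix.mulVec_add, WithLp.equiv_symm_apply,
          WithLp.toLp_add]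
      map_smul' := by
        intro c v
        simp only [WithLp.equiv_apply, WithLp.ofLp_smul, Matrix.mulVec_smul, WithLp.equiv_symm_apply,
          WithLp.toLp_smul,
          RingHom.id_apply] }

lemma l2_mulVec_eq_matCLM' {m n : ℕ} (A : Matrix (Fin m) (Fin n) ℝ) (v : Fin n → ℝ) :
    l2 (A.mulVec v) = ‖matCLM' A ((WithLp.equiv 2 (Fin n → ℝ)).symm v)‖ := by
  rw [l2_eq_norm']
  congr 1

lemma opNorm2_bddAbove' {m n : ℕ} (A : Matrix (Fin m) (Fin n) ℝ) :
    BddAbove {c : ℝ | ∃ v : Fin n → ℝ, l2 v ≤ 1 ∧ c = l2 (A.mulVec v)} := by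
  refine ⟨‖matCLM' A‖, ?_⟩
  rintro c ⟨v, hv, rfl⟩
  rw [l2_mulVec_eq_matCLM']
  calc ‖matCLM' A ((WithLp.equiv 2 (Fin n → ℝ)).symm v)‖
      ≤ ‖matCLM' A‖ * ‖(WithLp.equiv 2 (Fin n → ℝ)).symm v‖ := (matCLM' A).le_opNorm _
    _ ≤ ‖matCLM' A‖ * 1 := by
        apply mul_le_mul_of_nonneg_left _ (norm_nonneg _)
        rw [← l2_eq_norm']; exact hv
    _ = ‖matCLM' A‖ := mul_one _

lemma opNorm2_nonneg' {m n : ℕ} (A : Matrix (Fin m) (Fin n) ℝ) : 0 ≤ opNorm2 A := by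
  apply le_csSup (opNorm2_bddAbove' A)
  exact ⟨0, by simp [l2_zero'], by simp [l2_zero', Matrix.mulVec_zero]⟩

lemma l2_mulVec_le' {m n : ℕ} (A : Matrix (Fin m) (Fin n) ℝ) (v : Fin n → ℝ) :
    l2 (A.mulVec v) ≤ opNorm2 A * l2 v := by
  rcases eq_or_lt_of_le (l2_nonneg' v) with h | h
  · have hv : v = 0 := l2_eq_zero' h.symm
    simp [hv, Matrix.mulVec_zero, l2_zero', ← h]
  · set c := l2 v with hc
    have hu : l2 (c⁻¹ • v) = 1 := by
      rw [l2_smul', abs_of_pos (inv_pos.mpr h), inv_mul_cancel₀ (ne_of_gt h)]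
    have hmem : l2 (A.mulVec (c⁻¹ • v)) ∈
        {c : ℝ | ∃ v : Fin n → ℝ, l2 v ≤ 1 ∧ c = l2 (A.mulVec v)} :=
      ⟨c⁻¹ • v, le_of_eq hu, rfl⟩
    have h1 : l2 (A.mulVec (c⁻¹ • v)) ≤ opNorm2 A := le_csSup (opNorm2_bddAbove' A) hmem
    have h2 : A.mulVec v = c • A.mulVec (c⁻¹ • v) := by
      rw [Matrix.mulVec_smul, smul_smul, mul_inv_cancel₀ (ne_of_gt h), one_smul]
    rw [h2, l2_smul', abs_of_pos h]
    calc c * l2 (A.mulVec (c⁻¹ • v)) ≤ c * opNorm2 A :=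
          mul_le_mul_of_nonneg_left h1 (le_of_lt h)
      _ = opNorm2 A * c := mul_comm _ _

lemma limsup_le_max' {u : ℝ → ℝ} {a : ℝ}
    (h : ∀ᶠ θ in nhdsWithin (0:ℝ) (Set.Ioi 0), u θ ≤ a) :
    Filter.limsup u (nhdsWithin (0:ℝ) (Set.Ioi 0)) ≤ max a 0 := by
  rw [Filter.limsup_eq]
  by_cases hb : BddBelow {b : ℝ | ∀ᶠ θ in nhdsWithin (0:ℝ) (Set.Ioi 0), u θ ≤ b}
  · exact le_trans (csInf_le hb h) (le_max_left _ _)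
  · rw [Real.sInf_of_not_bddBelow hb]
    exact le_max_right _ _

lemma grad_abs_le' (F : ℝ → ℝ) (ρ α : ℝ) (hF : IsWCSM F ρ) (hα : IsAlpha F α)
    {t f : ℝ} (hf : f ∈ genGrad F t) : |f| ≤ α := by
  obtain ⟨hα0, -, hαle⟩ := hα
  by_cases ht : t = 0
  · rw [genGrad, if_pos ht] at hf
    simp only [Set.mem_singleton_iff] at hf
    simp [hf, hα0.le]
  rw [genGrad, if_neg ht] at hf
  have key_up : ∀ s : ℝ, 0 < s → ∀ θ : ℝ, 0 < θ → (F (s + θ) - F s) / θ ≤ α := by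
    intro s hs θ hθ
    have h1 : F (s + θ) / (s + θ) ≤ F s / s := hF.ratio_anti s (s + θ) hs (by linarith)
    have h1' : F (s + θ) * s ≤ F s * (s + θ) :=
      (div_le_div_iff₀ (by linarith) hs).mp h1
    have h2' : F s ≤ α * s := by
      have := hαle s; rwa [abs_of_pos hs] at this
    rw [div_le_iff₀ hθ]
    nlinarith [mul_pos hs hθ]
  have key_down : ∀ s : ℝ, 0 < s → ∀ θ : ℝ, 0 < θ → θ < s → (F (s - θ) - F s) / θ ≤ 0 := by
    intro s hs θ hθ hθs
    apply div_nonpos_of_nonpos_of_nonneg _ hθ.le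
    have := hF.mono (s - θ) s (by linarith) (by linarith)
    linarith
  rcases lt_or_gt_of_ne ht with htneg | htpos
  · -- t < 0
    have h1 : f ≤ 0 := by
      have h := hf 1
      rw [one_mul] at h
      refine h.trans (le_trans (limsup_le_max' (a := 0) ?_) (by simp))
      filter_upwards [Ioo_mem_nhdsGT_of_mem (Set.left_mem_Ico.mpr (by linarith : (0:ℝ) < -t))]
        with θ hθ
      have he : F (t + θ * 1) = F (-t - θ) := by
        rw [mul_one, ← hF.even (t + θ)]; ring_nf
      rw [he]
      rw [← hF.even t] at *
      apply div_nonpos_of_nonpos_of_nonneg _ hθ.1.le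
      have := hF.mono (-t - θ) (-t) (by linarith [hθ.2]) (by linarith [hθ.1])
      linarith
    have h2 : -f ≤ α := by
      have h := hf (-1)
      rw [mul_comm, mul_neg_one] at h
      refine h.trans (le_trans (limsup_le_max' (a := α) ?_) (by simp [hα0.le, le_max_iff]))
      filter_upwards [self_mem_nhdsWithin] with θ hθ
      have hθ0 : (0:ℝ) < θ := hθ
      have he : F (t + θ * (-1)) = F (-t + θ) := by
        rw [← hF.even (t + θ * (-1))]; ring_nf
      rw [he, ← hF.even t]
      have := key_up (-t) (by linarith) θ hθ0
      linarith [this]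
    rw [abs_le]; constructor <;> linarith [hα0]
  · -- t > 0
    have h1 : f ≤ α := by
      have h := hf 1
      rw [one_mul] at h
      refine h.trans (le_trans (limsup_le_max' (a := α) ?_) (by simp [hα0.le, le_max_iff]))
      filter_upwards [self_mem_nhdsWithin] with θ hθ
      have hθ0 : (0:ℝ) < θ := hθ
      rw [mul_one]
      exact key_up t htpos θ hθ0
    have h2 : -f ≤ 0 := by
      have h := hf (-1)
      rw [mul_comm, mul_neg_one] at h
      refine h.trans (le_trans (limsup_le_max' (a := 0) ?_) (by simp))
      filter_upwards [Ioo_mem_nhdsGT_of_mem (Set.left_mem_Ico.mpr htpos)] with θ hθ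
      have he : t + θ * (-1) = t - θ := by ring
      rw [he]
      exact key_down t htpos θ hθ.1 hθ.2
    rw [abs_le]; constructor <;> linarith [hα0]

set_option maxHeartbeats 1000000 in
/-- Lemma 7: for an APGG sequence with `y = Ax* + e`,
`‖A(x(n) − x*)‖₂ ≤ ‖y‖₂ ζ^{n+1} + (C5/2)κ + ‖e‖₂`. -/
theorem stmt15 {M N : ℕ} (hMN : M < N) (F : ℝ → ℝ) (ρ α : ℝ)
    (hF : IsWCSM F ρ) (hα : IsAlpha F α)
    (A : Matrix (Fin M) (Fin N) ℝ) (B : Matrix (Fin M) (Fin M) ℝ)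
    (xs : Fin N → ℝ) (e : Fin M → ℝ) (y : Fin M → ℝ) (hy : y = A.mulVec xs + e)
    (ζ : ℝ) (hζ : opNorm2 (1 - A * (A.transpose * B)) ≤ ζ)
    (hζ1 : ζ < 1) (κ : ℝ) (hκ : 0 < κ)
    (x g : ℕ → Fin N → ℝ)
    (hg : ∀ n i, g n i ∈ genGrad F (x n i))
    (hx0 : x 0 = (A.transpose * B).mulVec y)
    (hrec : ∀ n, x (n + 1) =
      (A.transpose * B).mulVec y + (1 - A.transpose * B * A).mulVec (x n - κ • g n))
    (C5 : ℝ) (hC5 : C5 = 2 * (ζ * α * Real.sqrt N * opNorm2 A) / (1 - ζ)) :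
    ∀ n : ℕ, l2 (A.mulVec (x n - xs)) ≤ l2 y * ζ ^ (n + 1) + C5 / 2 * κ + l2 e := by
  have hζ0 : 0 ≤ ζ := le_trans (opNorm2_nonneg' _) hζ
  have hζ1' : 0 < 1 - ζ := by linarith
  have hAnn : 0 ≤ opNorm2 A := opNorm2_nonneg' A
  set P : ℝ := opNorm2 A * (Real.sqrt N * α) with hPdef
  have hP : 0 ≤ P := by
    apply mul_nonneg hAnn (mul_nonneg (Real.sqrt_nonneg _) hα.1.le)
  have hAg : ∀ n, l2 (A.mulVec (g n)) ≤ P := by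
    intro n
    refine (l2_mulVec_le' A (g n)).trans (mul_le_mul_of_nonneg_left ?_ hAnn)
    exact l2_le_of_abs_le' hα.1.le (fun i => grad_abs_le' F ρ α hF hα (hg n i))
  have hC52 : C5 / 2 = ζ * P / (1 - ζ) := by rw [hC5, hPdef]; ring
  have hC52nn : 0 ≤ C5 / 2 := by
    rw [hC52]; positivity
  have heq : ζ * (C5 / 2) + ζ * P = C5 / 2 := by
    rw [hC52]; field_simp; ring
  -- main induction
  have key : ∀ n : ℕ, l2 (A.mulVec (x n) - y) ≤ l2 y * ζ ^ (n + 1) + C5 / 2 * κ := by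
    intro n
    induction n with
    | zero =>
      have hb : A.mulVec (x 0) - y = -((1 - A * (A.transpose * B)).mulVec y) := by
        rw [hx0]
        simp only [Matrix.sub_mulVec, Matrix.one_mulVec, Matrix.mulVec_mulVec]
        module
      rw [hb, l2_neg']
      have s1 : l2 ((1 - A * (A.transpose * B)).mulVec y) ≤
          opNorm2 (1 - A * (A.transpose * B)) * l2 y := l2_mulVec_le' _ _
      have s2 : opNorm2 (1 - A * (A.transpose * B)) * l2 y ≤ ζ * l2 y :=
        mul_le_mul_of_nonneg_right hζ (l2_nonneg' _)
      have s3 : ζ * l2 y ≤ l2 y * ζ ^ (0 + 1) + C5 / 2 * κ := by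
        rw [pow_one, mul_comm]
        nlinarith [mul_nonneg hC52nn hκ.le]
      linarith
    | succ n ih =>
      have hid : A.mulVec (x (n + 1)) - y =
          (1 - A * (A.transpose * B)).mulVec
            ((A.mulVec (x n) - y) + (-κ) • A.mulVec (g n)) := by
        rw [hrec n]
        simp only [Matrix.mulVec_add, Matrix.mulVec_sub, Matrix.sub_mulVec, Matrix.one_mulVec,
          Matrix.mulVec_smul, Matrix.mulVec_mulVec, Matrix.mulVec_neg, Matrix.sub_mul,
          Matrix.one_mul, Matrix.mul_assoc, smul_sub, smul_add, neg_smul]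
        module
      have htri : l2 ((A.mulVec (x n) - y) + (-κ) • A.mulVec (g n))
          ≤ l2 (A.mulVec (x n) - y) + κ * l2 (A.mulVec (g n)) := by
        refine (l2_add_le' _ _).trans ?_
        rw [l2_smul', abs_neg, abs_of_pos hκ]
      have hbound : l2 ((A.mulVec (x n) - y) + (-κ) • A.mulVec (g n))
          ≤ (l2 y * ζ ^ (n + 1) + C5 / 2 * κ) + κ * P := by
        have h1 := mul_le_mul_of_nonneg_left (hAg n) hκ.le
        linarith
      have s1 : l2 (A.mulVec (x (n + 1)) - y) ≤
          opNorm2 (1 - A * (A.transpose * B)) *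
            l2 ((A.mulVec (x n) - y) + (-κ) • A.mulVec (g n)) := by
        rw [hid]; exact l2_mulVec_le' _ _
      have s2 : opNorm2 (1 - A * (A.transpose * B)) *
            l2 ((A.mulVec (x n) - y) + (-κ) • A.mulVec (g n)) ≤
          ζ * l2 ((A.mulVec (x n) - y) + (-κ) • A.mulVec (g n)) :=
        mul_le_mul_of_nonneg_right hζ (l2_nonneg' _)
      have s3 : ζ * l2 ((A.mulVec (x n) - y) + (-κ) • A.mulVec (g n)) ≤
          ζ * ((l2 y * ζ ^ (n + 1) + C5 / 2 * κ) + κ * P) :=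
        mul_le_mul_of_nonneg_left hbound hζ0
      have s4 : ζ * ((l2 y * ζ ^ (n + 1) + C5 / 2 * κ) + κ * P) =
          l2 y * ζ ^ (n + 1 + 1) + C5 / 2 * κ := by
        linear_combination κ * heq
      linarith
  intro n
  have hsplit : A.mulVec (x n - xs) = (A.mulVec (x n) - y) + e := by
    rw [hy]
    simp only [Matrix.mulVec_sub]
    abel
  rw [hsplit]
  have t1 : l2 ((A.mulVec (x n) - y) + e) ≤ l2 (A.mulVec (x n) - y) + l2 e := l2_add_le' _ _
  linarith [key n]
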